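/- Let Σ₁ and Σ₂ be disjoint finite alphabets and let L ⊆ Σ₁*·Σ₂^ω be a language of infinite words such that L = L(φ) for some LTL formula φ. Then there exists a finite family (φᵢ¹, φᵢ²)_{1≤i≤k} of LTL formulas such that L = ⋃_{1≤i≤k} L(φᵢ¹)·L(φᵢ²), where each L(φᵢ¹) ⊆ Σ₁* is a language of finite words and each L(φᵢ²) ⊆ Σ₂^ω is a language of infinite words. -/

import Mathlib

/-! ### LTL over finite and infinite words, with letters as atoms -/

inductive LTLv (σ : Type) : Type where
  | atom : σ → LTLv σ
  | neg  : LTLv σ → LTLv σ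
  | disj : LTLv σ → LTLv σ → LTLv σ
  | next : LTLv σ → LTLv σ
  | untl : LTLv σ → LTLv σ → LTLv σ

/-- Semantics over infinite words: the atom `c` holds iff the first letter is `c`. -/
def LTLv.satInf {σ : Type} : LTLv σ → (ℕ → σ) → Prop
  | .atom c, w => w 0 = c
  | .neg φ, w => ¬ φ.satInf w
  | .disj φ ψ, w => φ.satInf w ∨ ψ.satInf w
  | .next φ, w => φ.satInf (fun i => w (i + 1))
  | .untl φ ψ, w => ∃ j, ψ.satInf (fun i => w (i + j)) ∧
      ∀ j' < j, φ.satInf (fun i => w (i + j'))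

/-- Semantics over finite words, at position `i`. -/
def LTLv.satFinAt {σ : Type} : LTLv σ → List σ → ℕ → Prop
  | .atom c, w, i => w[i]? = some c
  | .neg φ, w, i => ¬ φ.satFinAt w i
  | .disj φ ψ, w, i => φ.satFinAt w i ∨ ψ.satFinAt w i
  | .next φ, w, i => i + 1 < w.length ∧ φ.satFinAt w (i + 1)
  | .untl φ ψ, w, i => ∃ j, i ≤ j ∧ j < w.length ∧ ψ.satFinAt w j ∧
      ∀ j', i ≤ j' → j' < j → φ.satFinAt w j'

/-- A finite word satisfies a formula. -/
def LTLv.satFin {σ : Type} (φ : LTLv σ) (w : List σ) : Prop := φ.satFinAt w 0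

/-- Concatenation of a finite word with an infinite word. -/
def catInf {σ : Type} (u : List σ) (v : ℕ → σ) : ℕ → σ :=
  fun j => if h : j < u.length then u.get ⟨j, h⟩ else v (j - u.length)

namespace Split
variable {σ : Type}

def someAtom : LTLv σ → σ
  | .atom c => c
  | .neg a => someAtom a
  | .disj a _ => someAtom a
  | .next a => someAtom a
  | .untl a _ => someAtom a

def topf (c₀ : σ) : LTLv σ := .disj (.atom c₀) (.neg (.atom c₀))
def botf (c₀ : σ) : LTLv σ := .neg (topf c₀)
def conjf (x y : LTLv σ) : LTLv σ := .neg (.disj (.neg x) (.neg y))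
def bigOr (c₀ : σ) (l : List σ) : LTLv σ :=
  l.foldr (fun c acc => .disj (.atom c) acc) (botf c₀)
def gfin (c₀ : σ) (A : LTLv σ) : LTLv σ := .neg (.untl (topf c₀) (.neg A))

def emptyVal : LTLv σ → Bool
  | .atom _ => false
  | .neg a => !emptyVal a
  | .disj a b => emptyVal a || emptyVal b
  | .next _ => false
  | .untl _ _ => false

def condF (c₀ : σ) (b : Bool) (f : LTLv σ) : LTLv σ := if b then f else botf c₀
def epsF (c₀ : σ) (Γ : List σ) : LTLv σ := .neg (bigOr c₀ Γ)
def wnext (c₀ : σ) (Γ : List σ) (a : LTLv σ) : LTLv σ :=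
  conjf (bigOr c₀ Γ) (.disj (.next a) (condF c₀ (emptyVal a) (.neg (.next (topf c₀)))))

@[simp] lemma topf_fin (c₀ : σ) (u : List σ) (i : ℕ) : (topf c₀).satFinAt u i := by
  simp [topf, LTLv.satFinAt]; tauto

@[simp] lemma topf_inf (c₀ : σ) (v : ℕ → σ) : (topf c₀).satInf v := by
  simp [topf, LTLv.satInf]; tauto

@[simp] lemma botf_fin (c₀ : σ) (u : List σ) (i : ℕ) : ¬ (botf c₀).satFinAt u i := by
  simp [botf, LTLv.satFinAt]

@[simp] lemma botf_inf (c₀ : σ) (v : ℕ → σ) : ¬ (botf c₀).satInf v := by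
  simp [botf, LTLv.satInf]

@[simp] lemma conjf_fin (x y : LTLv σ) (u : List σ) (i : ℕ) :
    (conjf x y).satFinAt u i ↔ x.satFinAt u i ∧ y.satFinAt u i := by
  simp [conjf, LTLv.satFinAt]

@[simp] lemma conjf_inf (x y : LTLv σ) (v : ℕ → σ) :
    (conjf x y).satInf v ↔ x.satInf v ∧ y.satInf v := by
  simp [conjf, LTLv.satInf]

@[simp] lemma condF_fin (c₀ : σ) (b : Bool) (f : LTLv σ) (u : List σ) (i : ℕ) :
    (condF c₀ b f).satFinAt u i ↔ b = true ∧ f.satFinAt u i := by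
  cases b <;> simp [condF]

lemma bigOr_cons (c₀ a : σ) (t : List σ) :
    bigOr c₀ (a :: t) = .disj (.atom a) (bigOr c₀ t) := rfl

@[simp] lemma bigOr_fin (c₀ : σ) (l : List σ) (u : List σ) (i : ℕ) :
    (bigOr c₀ l).satFinAt u i ↔ ∃ c ∈ l, u[i]? = some c := by
  induction l with
  | nil => simp [bigOr]
  | cons a t ih =>
      rw [bigOr_cons]
      show (LTLv.atom a).satFinAt u i ∨ (bigOr c₀ t).satFinAt u i ↔ _
      rw [ih]; simp [LTLv.satFinAt]

@[simp] lemma bigOr_inf (c₀ : σ) (l : List σ) (v : ℕ → σ) :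
    (bigOr c₀ l).satInf v ↔ v 0 ∈ l := by
  induction l with
  | nil => simp [bigOr]
  | cons a t ih =>
      rw [bigOr_cons]
      show (LTLv.atom a).satInf v ∨ (bigOr c₀ t).satInf v ↔ _
      rw [ih]; simp [LTLv.satInf, eq_comm]

lemma satFinAt_drop (a : LTLv σ) (u : List σ) (j : ℕ) :
    ∀ i, a.satFinAt (u.drop j) i ↔ a.satFinAt u (j + i) := by
  induction a with
  | atom c => intro i; simp [LTLv.satFinAt]
  | neg a ih => intro i; simp [LTLv.satFinAt, ih]
  | disj a b iha ihb => intro i; simp [LTLv.satFinAt, iha, ihb]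
  | next a ih => intro i
                 simp only [LTLv.satFinAt, ih, List.length_drop]
                 constructor
                 · rintro ⟨h1, h2⟩; exact ⟨by omega, by rwa [show j + (i+1) = j + i + 1 by omega] at h2⟩
                 · rintro ⟨h1, h2⟩; exact ⟨by omega, by rwa [show j + (i+1) = j + i + 1 by omega]⟩
  | untl a b iha ihb =>
      intro i
      simp only [LTLv.satFinAt, List.length_drop]
      constructor
      · rintro ⟨j₂, h1, h2, h3, h4⟩
        refine ⟨j + j₂, by omega, by omega, (ihb j₂).1 h3, ?_⟩
        intro j' hj1 hj2
        have := h4 (j' - j) (by omega) (by omega)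
        have := (iha (j' - j)).1 this
        rwa [show j + (j' - j) = j' by omega] at this
      · rintro ⟨j₂, h1, h2, h3, h4⟩
        refine ⟨j₂ - j, by omega, by omega, ?_, ?_⟩
        · have := (ihb (j₂ - j)).2 (by rwa [show j + (j₂ - j) = j₂ by omega]); exact this
        · intro j' hj1 hj2
          exact (iha j').2 (h4 (j + j') (by omega) (by omega))

lemma satFinAt_nil (a : LTLv σ) : ∀ i, (a.satFinAt ([] : List σ) i ↔ emptyVal a = true) := by
  induction a with
  | atom c => intro i; simp [LTLv.satFinAt, emptyVal]
  | neg a ih => intro i; simp [LTLv.satFinAt, emptyVal, ih]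
  | disj a b iha ihb => intro i; simp [LTLv.satFinAt, emptyVal, iha, ihb]
  | next a ih => intro i; simp [LTLv.satFinAt, emptyVal]
  | untl a b iha ihb => intro i; simp [LTLv.satFinAt, emptyVal]

lemma gfin_fin (c₀ : σ) (A : LTLv σ) (u : List σ) :
    (gfin c₀ A).satFinAt u 0 ↔ ∀ j < u.length, A.satFinAt u j := by
  simp only [gfin, LTLv.satFinAt]
  constructor
  · intro h j hj
    by_contra hA
    exact h ⟨j, Nat.zero_le j, hj, hA, fun j' _ _ => topf_fin c₀ u j'⟩
  · rintro h ⟨j, -, hj, hA, -⟩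
    exact hA (h j hj)

@[simp] lemma catInf_nil (v : ℕ → σ) : catInf ([] : List σ) v = v := by
  funext j; simp [catInf]

lemma catInf_shift (u : List σ) (v : ℕ → σ) {j : ℕ} (hj : j ≤ u.length) :
    (fun i => catInf u v (i + j)) = catInf (u.drop j) v := by
  funext i
  simp only [catInf, List.length_drop]
  by_cases h : i + j < u.length
  · rw [dif_pos h, dif_pos (by omega)]
    simp [List.getElem_drop]
    congr 1; omega
  · rw [dif_neg h, dif_neg (by omega)]
    congr 1; omega

lemma catInf_shift_past (u : List σ) (v : ℕ → σ) (t : ℕ) :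
    (fun i => catInf u v (i + (u.length + t))) = fun i => v (i + t) := by
  funext i
  simp only [catInf]
  rw [dif_neg (by omega)]
  congr 1; omega

lemma catInf_cons_zero (a : σ) (u : List σ) (v : ℕ → σ) : catInf (a :: u) v 0 = a := by
  simp [catInf]

lemma catInf_cons_shift (a : σ) (u : List σ) (v : ℕ → σ) :
    (fun i => catInf (a :: u) v (i + 1)) = catInf u v := by
  have := catInf_shift (a :: u) v (j := 1) (by simp)
  simpa using this

def negD (c₀ : σ) : List (LTLv σ × LTLv σ) → List (LTLv σ × LTLv σ)
  | [] => [(topf c₀, topf c₀)]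
  | p :: t => (negD c₀ t).flatMap fun q =>
      [(conjf (.neg p.1) q.1, q.2), (q.1, conjf (.neg p.2) q.2)]

lemma negD_spec (c₀ : σ) (l : List (LTLv σ × LTLv σ)) (u : List σ) (v : ℕ → σ) :
    (∃ p ∈ negD c₀ l, p.1.satFin u ∧ p.2.satInf v) ↔
      ∀ q ∈ l, ¬(q.1.satFin u ∧ q.2.satInf v) := by
  induction l with
  | nil => simp [negD, LTLv.satFin]
  | cons p t ih =>
      simp only [negD, List.mem_flatMap, List.mem_cons, List.mem_singleton]
      constructor
      · rintro ⟨r, ⟨q, hq, hr⟩, hr1, hr2⟩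
        rcases hr with rfl | rfl | h
        · simp only [LTLv.satFin, conjf_fin] at hr1
          have hqt : ∃ p ∈ negD c₀ t, p.1.satFin u ∧ p.2.satInf v := ⟨q, hq, hr1.2, hr2⟩
          intro x hx
          rcases hx with rfl | hx
          · rintro ⟨h1, -⟩
            exact hr1.1 h1
          · exact ih.1 hqt x hx
        · simp only [conjf_inf] at hr2
          have hqt : ∃ p ∈ negD c₀ t, p.1.satFin u ∧ p.2.satInf v := ⟨q, hq, hr1, hr2.2⟩
          intro x hx
          rcases hx with rfl | hx
          · rintro ⟨-, h2⟩
            exact hr2.1 h2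
          · exact ih.1 hqt x hx
        · exact absurd h (by simp)
      · intro h
        have hhead := h p (Or.inl rfl)
        obtain ⟨q, hq, hq1, hq2⟩ := ih.2 fun x hx => h x (Or.inr hx)
        by_cases hp1 : p.1.satFin u
        · have hp2 : ¬ p.2.satInf v := fun h2 => hhead ⟨hp1, h2⟩
          exact ⟨(q.1, conjf (.neg p.2) q.2), ⟨q, hq, by simp⟩, hq1,
            by simp [LTLv.satInf, hp2, hq2]⟩
        · exact ⟨(conjf (.neg p.1) q.1, q.2), ⟨q, hq, by simp⟩,
            by simp [LTLv.satFin, LTLv.satFinAt] at hp1 hq1 ⊢; exact ⟨hp1, hq1⟩, hq2⟩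

def subsetD (c₀ : σ) : List (LTLv σ × LTLv σ) → List (LTLv σ × LTLv σ)
  | [] => [(botf c₀, topf c₀)]
  | p :: t => (subsetD c₀ t).flatMap fun q =>
      [(.disj p.1 q.1, conjf p.2 q.2), (q.1, conjf (.neg p.2) q.2)]

lemma subsetD_ex (c₀ : σ) (l : List (LTLv σ × LTLv σ)) (v : ℕ → σ) :
    ∃ p ∈ subsetD c₀ l, p.2.satInf v := by
  induction l with
  | nil => exact ⟨(botf c₀, topf c₀), by simp [subsetD], by simp⟩
  | cons p t ih =>
      obtain ⟨q, hq, hqv⟩ := ih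
      by_cases hp : p.2.satInf v
      · exact ⟨(.disj p.1 q.1, conjf p.2 q.2), List.mem_flatMap.2 ⟨q, hq, by simp⟩,
          by simp [hp, hqv]⟩
      · exact ⟨(q.1, conjf (.neg p.2) q.2), List.mem_flatMap.2 ⟨q, hq, by simp⟩,
          by simp [conjf_inf, hqv]; exact hp⟩

lemma subsetD_char (c₀ : σ) (l : List (LTLv σ × LTLv σ)) (v : ℕ → σ) :
    ∀ p ∈ subsetD c₀ l, p.2.satInf v →
      ∀ (u : List σ) (j : ℕ),
        (p.1.satFinAt u j ↔ ∃ q ∈ l, q.1.satFinAt u j ∧ q.2.satInf v) := by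
  induction l with
  | nil =>
      intro p hp hv u j
      simp [subsetD] at hp
      subst hp
      simp
  | cons r t ih =>
      intro p hp hv u j
      simp only [subsetD, List.mem_flatMap, List.mem_cons, List.mem_singleton] at hp
      obtain ⟨q, hq, hpq⟩ := hp
      rcases hpq with rfl | rfl | h
      · simp only [conjf_inf] at hv
        have := ih q hq hv.2 u j
        show (LTLv.disj r.1 q.1).satFinAt u j ↔ _
        simp only [LTLv.satFinAt, this, List.mem_cons]
        constructor
        · rintro (h1 | ⟨x, hx, hx1, hx2⟩)
          · exact ⟨r, Or.inl rfl, h1, hv.1⟩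
          · exact ⟨x, Or.inr hx, hx1, hx2⟩
        · rintro ⟨x, (rfl | hx), hx1, hx2⟩
          · exact Or.inl hx1
          · exact Or.inr ⟨x, hx, hx1, hx2⟩
      · simp only [conjf_inf] at hv
        have := ih q hq hv.2 u j
        rw [this]
        constructor
        · rintro ⟨x, hx, hx1, hx2⟩; exact ⟨x, List.mem_cons_of_mem _ hx, hx1, hx2⟩
        · rintro ⟨x, hx, hx1, hx2⟩
          rcases List.mem_cons.1 hx with rfl | hx
          · exact absurd hx2 hv.1
          · exact ⟨x, hx, hx1, hx2⟩
      · exact absurd h (by simp)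

@[simp] lemma satFinAt_neg (f : LTLv σ) (u : List σ) (i : ℕ) :
    (LTLv.neg f).satFinAt u i ↔ ¬ f.satFinAt u i := Iff.rfl
@[simp] lemma satFinAt_disj (f g : LTLv σ) (u : List σ) (i : ℕ) :
    (LTLv.disj f g).satFinAt u i ↔ f.satFinAt u i ∨ g.satFinAt u i := Iff.rfl
@[simp] lemma satFinAt_next (f : LTLv σ) (u : List σ) (i : ℕ) :
    (LTLv.next f).satFinAt u i ↔ i + 1 < u.length ∧ f.satFinAt u (i + 1) := Iff.rfl
lemma satFinAt_atom (c : σ) (u : List σ) (i : ℕ) :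
    (LTLv.atom c).satFinAt u i ↔ u[i]? = some c := Iff.rfl
@[simp] lemma satInf_neg (f : LTLv σ) (v : ℕ → σ) :
    (LTLv.neg f).satInf v ↔ ¬ f.satInf v := Iff.rfl
@[simp] lemma satInf_disj (f g : LTLv σ) (v : ℕ → σ) :
    (LTLv.disj f g).satInf v ↔ f.satInf v ∨ g.satInf v := Iff.rfl
lemma satInf_next (f : LTLv σ) (v : ℕ → σ) :
    (LTLv.next f).satInf v ↔ f.satInf (fun i => v (i + 1)) := Iff.rfl
lemma satInf_atom (c : σ) (v : ℕ → σ) :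
    (LTLv.atom c).satInf v ↔ v 0 = c := Iff.rfl
lemma satInf_untl (f g : LTLv σ) (v : ℕ → σ) :
    (LTLv.untl f g).satInf v ↔ ∃ j, g.satInf (fun i => v (i + j)) ∧
      ∀ j' < j, f.satInf (fun i => v (i + j')) := Iff.rfl
lemma satFinAt_untl (f g : LTLv σ) (u : List σ) (i : ℕ) :
    (LTLv.untl f g).satFinAt u i ↔ ∃ j, i ≤ j ∧ j < u.length ∧ g.satFinAt u j ∧
      ∀ j', i ≤ j' → j' < j → f.satFinAt u j' := Iff.rfl

attribute [irreducible] topf botf conjf bigOr gfin condF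

lemma epsF_nil (c₀ : σ) (Γ : List σ) : (epsF c₀ Γ).satFin [] := by
  show ¬ (bigOr c₀ Γ).satFinAt [] 0
  simp

lemma epsF_cons (c₀ : σ) (Γ : List σ) (a : σ) (u : List σ) (ha : a ∈ Γ) :
    ¬ (epsF c₀ Γ).satFin (a :: u) := by
  show ¬ ¬ (bigOr c₀ Γ).satFinAt (a :: u) 0
  exact fun h => h ((bigOr_fin c₀ Γ (a :: u) 0).2 ⟨a, ha, by simp⟩)

lemma wnext_spec (c₀ : σ) (Γ : List σ) (f : LTLv σ) (a : σ) (u : List σ) (ha : a ∈ Γ) :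
    ((wnext c₀ Γ f).satFin (a :: u) ↔ f.satFin u) := by
  have hdrop : f.satFinAt u 0 ↔ f.satFinAt (a :: u) 1 := by
    simpa using satFinAt_drop f (a :: u) 1 0
  have h1 : (bigOr c₀ Γ).satFinAt (a :: u) 0 := (bigOr_fin c₀ Γ _ _).2 ⟨a, ha, by simp⟩
  simp only [wnext, LTLv.satFin, conjf_fin, satFinAt_disj, satFinAt_next, condF_fin,
    satFinAt_neg, h1, true_and, topf_fin, and_true, List.length_cons, Nat.zero_add]
  rw [← hdrop]
  cases u with
  | nil =>
      rw [satFinAt_nil]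
      simp only [List.length_nil]
      constructor
      · rintro (⟨h2, -⟩ | ⟨he, -⟩)
        · omega
        · exact he
      · intro he
        exact Or.inr ⟨he, by omega⟩
  | cons b t =>
      simp only [List.length_cons]
      constructor
      · rintro (⟨-, h2⟩ | ⟨-, hno⟩)
        · exact h2
        · exact absurd (by omega : (1:ℕ) < t.length + 1 + 1) hno
      · intro hf
        exact Or.inl ⟨by omega, hf⟩

def D (c₀ : σ) (Γ : List σ) : LTLv σ → List (LTLv σ × LTLv σ)
  | .atom c => [(.atom c, topf c₀), (epsF c₀ Γ, .atom c)]
  | .neg φ => negD c₀ (D c₀ Γ φ)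
  | .disj φ ψ => D c₀ Γ φ ++ D c₀ Γ ψ
  | .next φ => (D c₀ Γ φ).map (fun p => (wnext c₀ Γ p.1, p.2)) ++ [(epsF c₀ Γ, .next φ)]
  | .untl φ ψ => (subsetD c₀ (D c₀ Γ φ)).flatMap fun P => (subsetD c₀ (D c₀ Γ ψ)).flatMap fun Q =>
      [(.disj (.untl P.1 Q.1) (condF c₀ (emptyVal Q.1) (gfin c₀ P.1)), conjf P.2 Q.2),
       (condF c₀ (emptyVal P.1) (gfin c₀ P.1), conjf (conjf P.2 Q.2) (.next (.untl φ ψ)))]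

theorem mainD (c₀ : σ) (Γ : List σ) :
    ∀ (φ : LTLv σ) (u : List σ) (v : ℕ → σ), (∀ x ∈ u, x ∈ Γ) →
      (φ.satInf (catInf u v) ↔ ∃ p ∈ D c₀ Γ φ, p.1.satFin u ∧ p.2.satInf v) := by
  intro φ
  induction φ with
  | atom c =>
      intro u v hu
      cases u with
      | nil =>
          rw [catInf_nil]
          constructor
          · intro h
            exact ⟨(epsF c₀ Γ, .atom c), by simp [D], epsF_nil c₀ Γ, h⟩
          · rintro ⟨p, hp, h1, h2⟩
            simp only [D, List.mem_cons, List.mem_singleton, List.not_mem_nil, or_false] at hp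
            rcases hp with rfl | rfl
            · exact absurd h1 (by simp [LTLv.satFin, satFinAt_atom])
            · exact h2
      | cons a u' =>
          have hL : (LTLv.atom c).satInf (catInf (a :: u') v) ↔ a = c := by
            rw [satInf_atom, catInf_cons_zero]
          rw [hL]
          constructor
          · intro h
            refine ⟨(.atom c, topf c₀), by simp [D], ?_, topf_inf c₀ v⟩
            show (a :: u')[0]? = some c
            simp [h]
          · rintro ⟨p, hp, h1, h2⟩
            simp only [D, List.mem_cons, List.mem_singleton, List.not_mem_nil, or_false] at hp
            rcases hp with rfl | rfl
            · have : (a :: u')[0]? = some c := h1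
              simpa using this
            · exact absurd h1 (epsF_cons c₀ Γ a u' (hu a (List.mem_cons_self)))
  | neg f ihf =>
      intro u v hu
      rw [show (LTLv.neg f).satInf (catInf u v) ↔ ¬ f.satInf (catInf u v) from Iff.rfl,
        ihf u v hu, show D c₀ Γ (.neg f) = negD c₀ (D c₀ Γ f) from rfl,
        negD_spec c₀ (D c₀ Γ f) u v]
      simp only [not_exists, not_and]
  | disj f g ihf ihg =>
      intro u v hu
      rw [show (LTLv.disj f g).satInf (catInf u v) ↔
          f.satInf (catInf u v) ∨ g.satInf (catInf u v) from Iff.rfl, ihf u v hu, ihg u v hu]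
      show _ ↔ ∃ p ∈ D c₀ Γ f ++ D c₀ Γ g, _
      constructor
      · rintro (⟨p, hp, h⟩ | ⟨p, hp, h⟩)
        · exact ⟨p, List.mem_append_left _ hp, h⟩
        · exact ⟨p, List.mem_append_right _ hp, h⟩
      · rintro ⟨p, hp, h⟩
        rcases List.mem_append.1 hp with hp | hp
        · exact Or.inl ⟨p, hp, h⟩
        · exact Or.inr ⟨p, hp, h⟩
  | next f ihf =>
      intro u v hu
      cases u with
      | nil =>
          rw [catInf_nil]
          constructor
          · intro h
            exact ⟨(epsF c₀ Γ, .next f), by simp [D], epsF_nil c₀ Γ, h⟩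
          · rintro ⟨p, hp, h1, h2⟩
            simp only [D, List.mem_append, List.mem_map, List.mem_singleton,
              List.mem_cons, List.not_mem_nil, or_false] at hp
            rcases hp with ⟨q, hq, rfl⟩ | rfl
            · exfalso
              have h1' : (conjf (bigOr c₀ Γ) _).satFinAt [] 0 := h1
              rw [conjf_fin] at h1'
              have := (bigOr_fin c₀ Γ [] 0).1 h1'.1
              simp at this
            · exact h2
      | cons a u' =>
          have haΓ : a ∈ Γ := hu a (List.mem_cons_self)
          have hstep : (LTLv.next f).satInf (catInf (a :: u') v) ↔ f.satInf (catInf u' v) := by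
            rw [satInf_next, catInf_cons_shift]
          rw [hstep, ihf u' v (fun x hx => hu x (List.mem_cons_of_mem _ hx))]
          constructor
          · rintro ⟨p, hp, h1, h2⟩
            refine ⟨(wnext c₀ Γ p.1, p.2), ?_, (wnext_spec c₀ Γ p.1 a u' haΓ).2 h1, h2⟩
            simp only [D, List.mem_append, List.mem_map]
            exact Or.inl ⟨p, hp, rfl⟩
          · rintro ⟨p, hp, h1, h2⟩
            simp only [D, List.mem_append, List.mem_map, List.mem_singleton,
              List.mem_cons, List.not_mem_nil, or_false] at hp
            rcases hp with ⟨q, hq, rfl⟩ | rfl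
            · exact ⟨q, hq, (wnext_spec c₀ Γ q.1 a u' haΓ).1 h1, h2⟩
            · exact absurd h1 (epsF_cons c₀ Γ a u' haΓ)
  | untl f g ihf ihg =>
      intro u v hu
      -- satisfaction beyond the end of `u`
      have hov : ∀ x : LTLv σ, x.satFinAt u u.length ↔ emptyVal x = true := by
        intro x
        have h1 := satFinAt_drop x u u.length 0
        rw [List.drop_length] at h1
        rw [← Nat.add_zero u.length, ← h1, satFinAt_nil]
      have hdj : ∀ (x : LTLv σ) (j : ℕ), x.satFin (u.drop j) ↔ x.satFinAt u j := by
        intro x j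
        have := satFinAt_drop x u j 0
        simpa [LTLv.satFin] using this
      -- key characterization
      have key : ∀ (χ : LTLv σ),
          (∀ (u' : List σ) (v' : ℕ → σ), (∀ x ∈ u', x ∈ Γ) →
            (χ.satInf (catInf u' v') ↔ ∃ p ∈ D c₀ Γ χ, p.1.satFin u' ∧ p.2.satInf v')) →
          ∀ p ∈ subsetD c₀ (D c₀ Γ χ), p.2.satInf v →
          ∀ j ≤ u.length, (χ.satInf (fun i => catInf u v (i + j)) ↔ p.1.satFinAt u j) := by
        intro χ ihχ p hmem hpv j hj
        rw [catInf_shift u v hj,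
          ihχ (u.drop j) v (fun x hx => hu x (List.mem_of_mem_drop hx)),
          subsetD_char c₀ (D c₀ Γ χ) v p hmem hpv u j]
        simp only [hdj]
      -- the central claim, for any valid pair of subset-summaries
      have claim : ∀ P' Q', P' ∈ subsetD c₀ (D c₀ Γ f) → Q' ∈ subsetD c₀ (D c₀ Γ g) →
          P'.2.satInf v → Q'.2.satInf v →
          ((LTLv.untl f g).satInf (catInf u v) ↔
            (((∃ j, j < u.length ∧ Q'.1.satFinAt u j ∧ ∀ j' < j, P'.1.satFinAt u j') ∨
              (emptyVal Q'.1 = true ∧ ∀ j' < u.length, P'.1.satFinAt u j')) ∨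
             ((∀ j' < u.length, P'.1.satFinAt u j') ∧ emptyVal P'.1 = true ∧
               (LTLv.next (LTLv.untl f g)).satInf v))) := by
        intro P' Q' hP hQ hv1 hv2
        have kf := key f ihf P' hP hv1
        have kg := key g ihg Q' hQ hv2
        constructor
        · intro h
          rw [satInf_untl] at h
          obtain ⟨j, hψ, hφ⟩ := h
          by_cases hjm : j < u.length
          · exact Or.inl (Or.inl ⟨j, hjm, (kg j (le_of_lt hjm)).1 hψ,
              fun j' hj' => (kf j' (by omega)).1 (hφ j' hj')⟩)
          · by_cases hje : j = u.length
            · subst hje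
              exact Or.inl (Or.inr ⟨(hov Q'.1).1 ((kg u.length le_rfl).1 hψ),
                fun j' hj' => (kf j' (by omega)).1 (hφ j' hj')⟩)
            · have hjgt : u.length < j := by omega
              refine Or.inr ⟨fun j' hj' => (kf j' (by omega)).1 (hφ j' (by omega)), ?_, ?_⟩
              · exact (hov P'.1).1 ((kf u.length le_rfl).1 (hφ u.length hjgt))
              · rw [satInf_next, satInf_untl]
                refine ⟨j - u.length - 1, ?_, ?_⟩
                · have hψ' : g.satInf (fun i => v (i + (j - u.length))) := by
                    rw [show j = u.length + (j - u.length) by omega] at hψ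
                    rwa [catInf_shift_past] at hψ
                  have he : (fun i => v (i + (j - u.length - 1) + 1)) =
                      (fun i => v (i + (j - u.length))) := by
                    funext i; congr 1; omega
                  exact he ▸ hψ'
                · intro s hs
                  have h2 : f.satInf (fun i => catInf u v (i + (u.length + (s + 1)))) :=
                    hφ (u.length + (s + 1)) (by omega)
                  rw [catInf_shift_past] at h2
                  have he : (fun i => v (i + s + 1)) = (fun i => v (i + (s + 1))) := by
                    funext i; congr 1
                  exact he ▸ h2
        · intro h
          rw [satInf_untl]
          rcases h with (⟨j, hjm, hq, hp⟩ | ⟨hQe, hp⟩) | ⟨hp, hPe, hnext⟩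
          · exact ⟨j, (kg j (le_of_lt hjm)).2 hq,
              fun j' hj' => (kf j' (by omega)).2 (hp j' hj')⟩
          · exact ⟨u.length, (kg u.length le_rfl).2 ((hov Q'.1).2 hQe),
              fun j' hj' => (kf j' (by omega)).2 (hp j' hj')⟩
          · rw [satInf_next, satInf_untl] at hnext
            obtain ⟨t, hg2, hf2⟩ := hnext
            refine ⟨u.length + (t + 1), ?_, ?_⟩
            · rw [catInf_shift_past]
              have he : (fun i => v (i + t + 1)) = (fun i => v (i + (t + 1))) := by
                funext i; congr 1
              exact he ▸ hg2
            · intro j' hj'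
              by_cases hj'm : j' < u.length
              · exact (kf j' (le_of_lt hj'm)).2 (hp j' hj'm)
              · by_cases hj'e : j' = u.length
                · subst hj'e
                  exact (kf u.length le_rfl).2 ((hov P'.1).2 hPe)
                · have hrw : j' = u.length + ((j' - u.length - 1) + 1) := by omega
                  rw [hrw, catInf_shift_past]
                  have h3 := hf2 (j' - u.length - 1) (by omega)
                  have he : (fun i => v (i + (j' - u.length - 1) + 1)) =
                      (fun i => v (i + (j' - u.length - 1 + 1))) := by
                    funext i; congr 1
                  exact he ▸ h3
      have hDu : D c₀ Γ (.untl f g) =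
          (subsetD c₀ (D c₀ Γ f)).flatMap fun P => (subsetD c₀ (D c₀ Γ g)).flatMap fun Q =>
            [(.disj (.untl P.1 Q.1) (condF c₀ (emptyVal Q.1) (gfin c₀ P.1)), conjf P.2 Q.2),
             (condF c₀ (emptyVal P.1) (gfin c₀ P.1),
               conjf (conjf P.2 Q.2) (.next (.untl f g)))] := rfl
      constructor
      · intro h
        obtain ⟨P, hPmem, hPv⟩ := subsetD_ex c₀ (D c₀ Γ f) v
        obtain ⟨Q, hQmem, hQv⟩ := subsetD_ex c₀ (D c₀ Γ g) v
        have hc := (claim P Q hPmem hQmem hPv hQv).1 h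
        rcases hc with (h1 | h2) | h3
        · obtain ⟨j, hjm, hq, hp⟩ := h1
          refine ⟨(.disj (.untl P.1 Q.1) (condF c₀ (emptyVal Q.1) (gfin c₀ P.1)), conjf P.2 Q.2),
            ?_, ?_, (conjf_inf _ _ _).2 ⟨hPv, hQv⟩⟩
          · rw [hDu]
            exact List.mem_flatMap.2 ⟨P, hPmem, List.mem_flatMap.2 ⟨Q, hQmem, by simp⟩⟩
          · show (LTLv.disj _ _).satFinAt u 0
            rw [satFinAt_disj]
            exact Or.inl ⟨j, Nat.zero_le j, hjm, hq, fun j' _ hj' => hp j' hj'⟩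
        · obtain ⟨hQe, hp⟩ := h2
          refine ⟨(.disj (.untl P.1 Q.1) (condF c₀ (emptyVal Q.1) (gfin c₀ P.1)), conjf P.2 Q.2),
            ?_, ?_, (conjf_inf _ _ _).2 ⟨hPv, hQv⟩⟩
          · rw [hDu]
            exact List.mem_flatMap.2 ⟨P, hPmem, List.mem_flatMap.2 ⟨Q, hQmem, by simp⟩⟩
          · show (LTLv.disj _ _).satFinAt u 0
            rw [satFinAt_disj]
            exact Or.inr ((condF_fin _ _ _ _ _).2 ⟨hQe, (gfin_fin _ _ _).2 hp⟩)
        · obtain ⟨hp, hPe, hnext⟩ := h3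
          refine ⟨(condF c₀ (emptyVal P.1) (gfin c₀ P.1),
              conjf (conjf P.2 Q.2) (.next (.untl f g))), ?_, ?_, ?_⟩
          · rw [hDu]
            exact List.mem_flatMap.2 ⟨P, hPmem, List.mem_flatMap.2 ⟨Q, hQmem, by simp⟩⟩
          · exact (condF_fin _ _ _ _ _).2 ⟨hPe, (gfin_fin _ _ _).2 hp⟩
          · exact (conjf_inf _ _ _).2 ⟨(conjf_inf _ _ _).2 ⟨hPv, hQv⟩, hnext⟩
      · rintro ⟨p, hp, h1, h2⟩
        rw [hDu] at hp
        obtain ⟨P', hP', hp2⟩ := List.mem_flatMap.1 hp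
        obtain ⟨Q', hQ', hp3⟩ := List.mem_flatMap.1 hp2
        simp only [List.mem_cons, List.mem_singleton, List.not_mem_nil, or_false] at hp3
        rcases hp3 with rfl | rfl
        · have h2' := (conjf_inf _ _ _).1 h2
          apply (claim P' Q' hP' hQ' h2'.1 h2'.2).2
          have h1' : (LTLv.untl P'.1 Q'.1).satFinAt u 0 ∨
              (condF c₀ (emptyVal Q'.1) (gfin c₀ P'.1)).satFinAt u 0 := h1
          rcases h1' with h1' | h1'
          · obtain ⟨j, -, hjm, hq, hpp⟩ := h1'
            exact Or.inl (Or.inl ⟨j, hjm, hq, fun j' hj' => hpp j' (Nat.zero_le j') hj'⟩)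
          · obtain ⟨hQe, hgf⟩ := (condF_fin _ _ _ _ _).1 h1'
            exact Or.inl (Or.inr ⟨hQe, (gfin_fin _ _ _).1 hgf⟩)
        · have h2' := (conjf_inf _ _ _).1 h2
          have h2'' := (conjf_inf _ _ _).1 h2'.1
          apply (claim P' Q' hP' hQ' h2''.1 h2''.2).2
          obtain ⟨hPe, hgf⟩ := (condF_fin _ _ _ _ _).1 h1
          exact Or.inr ⟨(gfin_fin _ _ _).1 hgf, hPe, h2'.2⟩

lemma gin1_spec (c₀ : σ) (Γ : List σ) (u : List σ) :
    (gfin c₀ (bigOr c₀ Γ)).satFin u ↔ ∀ x ∈ u, x ∈ Γ := by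
  show (gfin c₀ (bigOr c₀ Γ)).satFinAt u 0 ↔ _
  rw [gfin_fin]
  constructor
  · intro h x hx
    obtain ⟨j, hj, rfl⟩ := List.mem_iff_getElem.1 hx
    obtain ⟨c, hc, hcc⟩ := (bigOr_fin c₀ Γ u j).1 (h j hj)
    rw [List.getElem?_eq_getElem hj] at hcc
    rw [show u[j] = c from Option.some.inj hcc]
    exact hc
  · intro h j hj
    exact (bigOr_fin c₀ Γ u j).2 ⟨u[j], h _ (List.getElem_mem hj), List.getElem?_eq_getElem hj⟩

lemma gin2_spec (c₀ : σ) (Γ : List σ) (v : ℕ → σ) :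
    (LTLv.neg (.untl (topf c₀) (.neg (bigOr c₀ Γ)))).satInf v ↔ ∀ j, v j ∈ Γ := by
  rw [satInf_neg, satInf_untl]
  constructor
  · intro h j
    by_contra hx
    refine h ⟨j, ?_, fun _ _ => topf_inf _ _⟩
    intro hb
    rw [bigOr_inf] at hb
    rw [Nat.zero_add] at hb
    exact hx hb
  · rintro h ⟨j, hneg, -⟩
    refine hneg ((bigOr_inf _ _ _).2 ?_)
    show v (0 + j) ∈ Γ
    rw [Nat.zero_add]
    exact h j

end Split

/-- **Splitting LTL languages in `Σ₁* · Σ₂^ω`**: if an LTL-definable language of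
infinite words is contained in `Σ₁* · Σ₂^ω` for disjoint finite alphabets, then
it is a finite union of concatenations `L(φᵢ¹) · L(φᵢ²)` with `L(φᵢ¹) ⊆ Σ₁*` and
`L(φᵢ²) ⊆ Σ₂^ω`. -/
theorem ltl_split_concatenation (σ : Type) (S₁ S₂ : Set σ)
    (hfin₁ : S₁.Finite) (hfin₂ : S₂.Finite) (hdis : Disjoint S₁ S₂)
    (L : Set (ℕ → σ)) (φ : LTLv σ) (hLφ : ∀ w, w ∈ L ↔ φ.satInf w)
    (hL : ∀ w ∈ L, ∃ (u : List σ) (v : ℕ → σ), w = catInf u v ∧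
      (∀ x ∈ u, x ∈ S₁) ∧ (∀ j, v j ∈ S₂)) :
    ∃ (k : ℕ) (φ₁ φ₂ : Fin k → LTLv σ),
      (∀ i, ∀ u : List σ, (φ₁ i).satFin u → ∀ x ∈ u, x ∈ S₁) ∧
      (∀ i, ∀ v : ℕ → σ, (φ₂ i).satInf v → ∀ j, v j ∈ S₂) ∧
      (∀ w, w ∈ L ↔ ∃ (i : Fin k) (u : List σ) (v : ℕ → σ),
        w = catInf u v ∧ (φ₁ i).satFin u ∧ (φ₂ i).satInf v) := by
  classical
  set c₀ := Split.someAtom φ with hc₀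
  set Γ₁ := hfin₁.toFinset.toList with hΓ₁d
  set Γ₂ := hfin₂.toFinset.toList with hΓ₂d
  have hΓ₁ : ∀ x, x ∈ Γ₁ ↔ x ∈ S₁ := fun x => by
    simp [hΓ₁d, Set.Finite.mem_toFinset]
  have hΓ₂ : ∀ x, x ∈ Γ₂ ↔ x ∈ S₂ := fun x => by
    simp [hΓ₂d, Set.Finite.mem_toFinset]
  set E := (Split.D c₀ Γ₁ φ).map (fun p =>
    (Split.conjf p.1 (Split.gfin c₀ (Split.bigOr c₀ Γ₁)),
     Split.conjf p.2 (.neg (.untl (Split.topf c₀) (.neg (Split.bigOr c₀ Γ₂)))))) with hE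
  refine ⟨E.length, fun i => (E.get i).1, fun i => (E.get i).2, ?_, ?_, ?_⟩
  · intro i u hsat x hx
    beta_reduce at hsat
    obtain ⟨p, hp, hpe⟩ := List.mem_map.1 (show E.get i ∈ E from E.get_mem i)
    rw [← hpe] at hsat
    have h2 := ((Split.conjf_fin _ _ u 0).1 hsat).2
    exact (hΓ₁ x).1 ((Split.gin1_spec c₀ Γ₁ u).1 h2 x hx)
  · intro i v hsat j
    beta_reduce at hsat
    obtain ⟨p, hp, hpe⟩ := List.mem_map.1 (show E.get i ∈ E from E.get_mem i)
    rw [← hpe] at hsat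
    have h2 := ((Split.conjf_inf _ _ v).1 hsat).2
    exact (hΓ₂ (v j)).1 ((Split.gin2_spec c₀ Γ₂ v).1 h2 j)
  · intro w
    constructor
    · intro hw
      obtain ⟨u, v, rfl, hu, hv⟩ := hL w hw
      have hu' : ∀ x ∈ u, x ∈ Γ₁ := fun x hx => (hΓ₁ x).2 (hu x hx)
      obtain ⟨p, hp, h1, h2⟩ :=
        (Split.mainD c₀ Γ₁ φ u v hu').1 ((hLφ _).1 hw)
      have hmem : (Split.conjf p.1 (Split.gfin c₀ (Split.bigOr c₀ Γ₁)),
          Split.conjf p.2 (.neg (.untl (Split.topf c₀) (.neg (Split.bigOr c₀ Γ₂))))) ∈ E :=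
        List.mem_map.2 ⟨p, hp, rfl⟩
      obtain ⟨i, hi⟩ := List.mem_iff_get.1 hmem
      refine ⟨i, u, v, rfl, ?_, ?_⟩
      · beta_reduce
        rw [hi]
        exact (Split.conjf_fin _ _ u 0).2 ⟨h1, (Split.gin1_spec c₀ Γ₁ u).2 hu'⟩
      · beta_reduce
        rw [hi]
        exact (Split.conjf_inf _ _ v).2 ⟨h2, (Split.gin2_spec c₀ Γ₂ v).2
          (fun j => (hΓ₂ (v j)).2 (hv j))⟩
    · rintro ⟨i, u, v, rfl, h1, h2⟩
      beta_reduce at h1 h2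
      obtain ⟨p, hp, hpe⟩ := List.mem_map.1 (show E.get i ∈ E from E.get_mem i)
      rw [← hpe] at h1 h2
      have h1' := (Split.conjf_fin _ _ u 0).1 h1
      have h2' := (Split.conjf_inf _ _ v).1 h2
      have hu1 : ∀ x ∈ u, x ∈ Γ₁ := (Split.gin1_spec c₀ Γ₁ u).1 h1'.2
      exact (hLφ _).2 ((Split.mainD c₀ Γ₁ φ u v hu1).2 ⟨p, hp, h1'.1, h2'.1⟩)
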